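/- For each integer n ≥ 2, the kernel G_n(t,s), defined by G_n(t,s) = (1/(2n(1−n²))) e^{n(t−s)} (n + tanh s)(n − tanh t) for t ≤ s and G_n(t,s) = (1/(2n(1−n²))) e^{n(s−t)} (n − tanh s)(n + tanh t) for t ≥ s, is a Green's function for L − n² where L = ∂_t² + 2 sech² t: for any continuous compactly supported f: ℝ → ℝ, the function u(t) = ∫_ℝ G_n(t,s) f(s) ds is C², bounded, and satisfies u'' + 2 sech²(t) u − n² u = f. -/

import Mathlib

open Real MeasureTheory Set

/-- The Green's function `G_n(t,s)` for `∂_t² + 2 sech² t − n²`, `n ≥ 2`. -/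
noncomputable def greenGn (n : ℤ) (t s : ℝ) : ℝ :=
  if t ≤ s then
    (1 / (2 * (n : ℝ) * (1 - (n : ℝ) ^ 2))) * Real.exp ((n : ℝ) * (t - s))
      * ((n : ℝ) + Real.tanh s) * ((n : ℝ) - Real.tanh t)
  else
    (1 / (2 * (n : ℝ) * (1 - (n : ℝ) ^ 2))) * Real.exp ((n : ℝ) * (s - t))
      * ((n : ℝ) - Real.tanh s) * ((n : ℝ) + Real.tanh t)

noncomputable def gPhi (n : ℤ) (t : ℝ) : ℝ := Real.exp (-(n:ℝ)*t) * ((n:ℝ) + Real.tanh t)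
noncomputable def gPsi (n : ℤ) (t : ℝ) : ℝ := Real.exp ((n:ℝ)*t) * ((n:ℝ) - Real.tanh t)
noncomputable def gPhi' (n : ℤ) (t : ℝ) : ℝ :=
  Real.exp (-(n:ℝ)*t) * (-(n:ℝ)*((n:ℝ) + Real.tanh t) + 1/Real.cosh t^2)
noncomputable def gPsi' (n : ℤ) (t : ℝ) : ℝ :=
  Real.exp ((n:ℝ)*t) * ((n:ℝ)*((n:ℝ) - Real.tanh t) - 1/Real.cosh t^2)

lemma tanh_hasDerivAt (x : ℝ) : HasDerivAt Real.tanh (1 / Real.cosh x ^ 2) x := by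
  have hfun : Real.tanh = fun x => Real.sinh x / Real.cosh x :=
    funext fun x => Real.tanh_eq_sinh_div_cosh x
  rw [hfun]
  have hc : Real.cosh x ≠ 0 := (Real.cosh_pos x).ne'
  have := (Real.hasDerivAt_sinh x).div (Real.hasDerivAt_cosh x) hc
  refine this.congr_deriv ?_
  have h1 := Real.cosh_sq_sub_sinh_sq x
  field_simp
  nlinarith [h1]

lemma hasDerivAt_gPhi (n : ℤ) (t : ℝ) : HasDerivAt (gPhi n) (gPhi' n t) t := by
  have he : HasDerivAt (fun t : ℝ => Real.exp (-(n:ℝ)*t)) (Real.exp (-(n:ℝ)*t) * (-(n:ℝ))) t := by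
    simpa using ((hasDerivAt_id t).const_mul (-(n:ℝ))).exp
  have ht : HasDerivAt (fun t : ℝ => (n:ℝ) + Real.tanh t) (1/Real.cosh t^2) t :=
    (tanh_hasDerivAt t).const_add _
  have := he.mul ht
  refine this.congr_deriv ?_
  unfold gPhi'; ring

lemma hasDerivAt_gPsi (n : ℤ) (t : ℝ) : HasDerivAt (gPsi n) (gPsi' n t) t := by
  have he : HasDerivAt (fun t : ℝ => Real.exp ((n:ℝ)*t)) (Real.exp ((n:ℝ)*t) * (n:ℝ)) t := by
    simpa using ((hasDerivAt_id t).const_mul ((n:ℝ))).exp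
  have ht : HasDerivAt (fun t : ℝ => (n:ℝ) - Real.tanh t) (-(1/Real.cosh t^2)) t :=
    (tanh_hasDerivAt t).const_sub _
  have := he.mul ht
  refine this.congr_deriv ?_
  unfold gPsi'; ring

lemma hasDerivAt_invcosh (t : ℝ) :
    HasDerivAt (fun t : ℝ => 1/Real.cosh t^2) (-2*Real.sinh t/Real.cosh t^3) t := by
  have hc : Real.cosh t ≠ 0 := (Real.cosh_pos t).ne'
  have h2 : Real.cosh t ^ 2 ≠ 0 := pow_ne_zero 2 hc
  have := ((Real.hasDerivAt_cosh t).pow 2).inv h2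
  simp only [one_div]
  refine this.congr_deriv ?_
  field_simp
  simp only [Pi.pow_apply]
  ring

lemma hasDerivAt_gPhi' (n : ℤ) (t : ℝ) :
    HasDerivAt (gPhi' n) (((n:ℝ)^2 - 2/Real.cosh t^2) * gPhi n t) t := by
  have he : HasDerivAt (fun t : ℝ => Real.exp (-(n:ℝ)*t)) (Real.exp (-(n:ℝ)*t) * (-(n:ℝ))) t := by
    simpa using ((hasDerivAt_id t).const_mul (-(n:ℝ))).exp
  have hin : HasDerivAt (fun t : ℝ => -(n:ℝ)*((n:ℝ) + Real.tanh t) + 1/Real.cosh t^2)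
      (-(n:ℝ)*(1/Real.cosh t^2) + (-2*Real.sinh t/Real.cosh t^3)) t :=
    (((tanh_hasDerivAt t).const_add ((n:ℝ))).const_mul (-(n:ℝ))).add (hasDerivAt_invcosh t)
  have := he.mul hin
  refine this.congr_deriv ?_
  have hc : Real.cosh t ≠ 0 := (Real.cosh_pos t).ne'
  unfold gPhi
  rw [Real.tanh_eq_sinh_div_cosh]
  field_simp
  ring

lemma hasDerivAt_gPsi' (n : ℤ) (t : ℝ) :
    HasDerivAt (gPsi' n) (((n:ℝ)^2 - 2/Real.cosh t^2) * gPsi n t) t := by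
  have he : HasDerivAt (fun t : ℝ => Real.exp ((n:ℝ)*t)) (Real.exp ((n:ℝ)*t) * (n:ℝ)) t := by
    simpa using ((hasDerivAt_id t).const_mul ((n:ℝ))).exp
  have hin : HasDerivAt (fun t : ℝ => (n:ℝ)*((n:ℝ) - Real.tanh t) - 1/Real.cosh t^2)
      ((n:ℝ)*(-(1/Real.cosh t^2)) - (-2*Real.sinh t/Real.cosh t^3)) t :=
    (((tanh_hasDerivAt t).const_sub ((n:ℝ))).const_mul ((n:ℝ))).sub (hasDerivAt_invcosh t)
  have := he.mul hin
  refine this.congr_deriv ?_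
  have hc : Real.cosh t ≠ 0 := (Real.cosh_pos t).ne'
  unfold gPsi
  rw [Real.tanh_eq_sinh_div_cosh]
  field_simp
  ring

lemma wronskian_gPhi_gPsi (n : ℤ) (t : ℝ) :
    gPhi' n t * gPsi n t - gPsi' n t * gPhi n t = 2*(n:ℝ)*(1-(n:ℝ)^2) := by
  have hc : Real.cosh t ≠ 0 := (Real.cosh_pos t).ne'
  have h1 : Real.cosh t^2 - Real.sinh t^2 = 1 := Real.cosh_sq_sub_sinh_sq t
  have hexp : Real.exp (-(n:ℝ)*t) * Real.exp ((n:ℝ)*t) = 1 := by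
    rw [← Real.exp_add]; simp
  unfold gPhi gPsi gPhi' gPsi'
  rw [Real.tanh_eq_sinh_div_cosh]
  field_simp
  simp only [neg_mul] at hexp ⊢
  linear_combination (-(2:ℝ)*(n:ℝ)*Real.cosh t^2*((n:ℝ)^2*Real.cosh t^2 - Real.sinh t^2)
      + 2*(n:ℝ)*Real.cosh t^2) * hexp + (-2*(n:ℝ)*Real.cosh t^2) * h1
      + (2*(n:ℝ)*Real.cosh t + 2*(n:ℝ)*Real.cosh t*Real.sinh t^2 - 2*(n:ℝ)*Real.cosh t^2
        - 2*(n:ℝ)*Real.cosh t^2*Real.sinh t^2 - 2*(n:ℝ)^3*Real.cosh t^3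
        + 2*(n:ℝ)^3*Real.cosh t^4) * hexp + (2*(n:ℝ)*Real.cosh t*(Real.cosh t - 1)) * h1

noncomputable def cG (n : ℤ) : ℝ := 1 / (2 * (n : ℝ) * (1 - (n : ℝ) ^ 2))

@[fun_prop]
lemma continuous_tanh' : Continuous Real.tanh := by
  have hfun : Real.tanh = fun x => Real.sinh x / Real.cosh x :=
    funext fun x => Real.tanh_eq_sinh_div_cosh x
  rw [hfun]
  exact Real.continuous_sinh.div Real.continuous_cosh fun x => (Real.cosh_pos x).ne'

@[fun_prop]
lemma continuous_gPhi (n : ℤ) : Continuous (gPhi n) := by unfold gPhi; fun_prop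

@[fun_prop]
lemma continuous_gPsi (n : ℤ) : Continuous (gPsi n) := by unfold gPsi; fun_prop

lemma abs_tanh_le_one (x : ℝ) : |Real.tanh x| ≤ 1 := by
  rw [Real.tanh_eq_sinh_div_cosh, abs_div, abs_of_pos (Real.cosh_pos x),
    div_le_one (Real.cosh_pos x)]
  nlinarith [Real.cosh_sq_sub_sinh_sq x, Real.cosh_pos x, abs_nonneg (Real.sinh x),
    sq_abs (Real.sinh x)]

lemma greenGn_left (n : ℤ) {s t : ℝ} (h : s ≤ t) :
    greenGn n t s = cG n * (gPsi n s * gPhi n t) := by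
  unfold greenGn cG gPhi gPsi
  have hE : ∀ u v : ℝ, Real.exp ((n:ℝ)*(u-v)) = Real.exp ((n:ℝ)*u) * Real.exp (-(n:ℝ)*v) :=
    fun u v => by rw [← Real.exp_add]; congr 1; ring
  rcases eq_or_lt_of_le h with rfl | h'
  · rw [if_pos le_rfl, hE]; ring
  · rw [if_neg (not_le.mpr h'), hE]; ring

lemma greenGn_right (n : ℤ) {s t : ℝ} (h : t ≤ s) :
    greenGn n t s = cG n * (gPhi n s * gPsi n t) := by
  unfold greenGn cG gPhi gPsi
  have hE : ∀ u v : ℝ, Real.exp ((n:ℝ)*(u-v)) = Real.exp ((n:ℝ)*u) * Real.exp (-(n:ℝ)*v) :=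
    fun u v => by rw [← Real.exp_add]; congr 1; ring
  rw [if_pos h, hE]; ring

lemma continuous_greenGn_snd (n : ℤ) (t : ℝ) : Continuous fun s => greenGn n t s := by
  unfold greenGn
  apply Continuous.if_le
  · fun_prop
  · fun_prop
  · exact continuous_const
  · exact continuous_id
  · rintro s rfl
    ring

lemma abs_greenGn_le (n : ℤ) (hn : 2 ≤ n) (t s : ℝ) :
    |greenGn n t s| ≤ |cG n| * ((n:ℝ)+1)^2 := by
  have hn' : (2:ℝ) ≤ (n:ℝ) := by exact_mod_cast hn
  have h1 : ∀ x : ℝ, |(n:ℝ) + Real.tanh x| ≤ (n:ℝ) + 1 := by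
    intro x
    have := abs_tanh_le_one x
    rw [abs_le] at this ⊢
    constructor <;> linarith
  have h2 : ∀ x : ℝ, |(n:ℝ) - Real.tanh x| ≤ (n:ℝ) + 1 := by
    intro x
    have := abs_tanh_le_one x
    rw [abs_le] at this ⊢
    constructor <;> linarith
  have hnn : (0:ℝ) ≤ (n:ℝ) + 1 := by linarith
  unfold greenGn
  have key : ∀ (y x₁ x₂ : ℝ), y ≤ 0 → |(n:ℝ) + Real.tanh x₁| ≤ (n:ℝ)+1 →
      |(n:ℝ) - Real.tanh x₂| ≤ (n:ℝ)+1 →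
      |(1 / (2 * (n : ℝ) * (1 - (n : ℝ) ^ 2))) * Real.exp y
        * ((n : ℝ) + Real.tanh x₁) * ((n : ℝ) - Real.tanh x₂)| ≤ |cG n| * ((n:ℝ)+1)^2 := by
    intro y x₁ x₂ hy hb1 hb2
    rw [abs_mul, abs_mul, abs_mul]
    have hey : |Real.exp y| ≤ 1 := by
      rw [abs_of_pos (Real.exp_pos y)]; exact Real.exp_le_one_iff.mpr hy
    calc |1 / (2 * (n:ℝ) * (1 - (n:ℝ)^2))| * |Real.exp y| * |(n:ℝ) + Real.tanh x₁|
          * |(n:ℝ) - Real.tanh x₂|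
        ≤ |cG n| * 1 * ((n:ℝ)+1) * ((n:ℝ)+1) := by
          unfold cG
          gcongr <;> positivity
      _ = |cG n| * ((n:ℝ)+1)^2 := by ring
  split_ifs with hts
  · exact key _ _ _ (by nlinarith) (h1 s) (h2 t)
  · have : (n:ℝ) * (s - t) ≤ 0 := by nlinarith [not_le.mp hts]
    calc |(1 / (2 * (n : ℝ) * (1 - (n : ℝ) ^ 2))) * Real.exp ((n:ℝ)*(s-t))
          * ((n : ℝ) - Real.tanh s) * ((n : ℝ) + Real.tanh t)|
        = |(1 / (2 * (n : ℝ) * (1 - (n : ℝ) ^ 2))) * Real.exp ((n:ℝ)*(s-t))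
          * ((n : ℝ) + Real.tanh t) * ((n : ℝ) - Real.tanh s)| := by ring_nf
      _ ≤ |cG n| * ((n:ℝ)+1)^2 := key _ _ _ this (h1 t) (h2 s)

noncomputable def FF (n : ℤ) (f : ℝ → ℝ) (a t : ℝ) : ℝ := ∫ s in a..t, gPsi n s * f s
noncomputable def HHg (n : ℤ) (f : ℝ → ℝ) (b t : ℝ) : ℝ := ∫ s in t..b, gPhi n s * f s
noncomputable def UU (n : ℤ) (f : ℝ → ℝ) (a b t : ℝ) : ℝ :=
  cG n * (gPhi n t * FF n f a t + gPsi n t * HHg n f b t)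
noncomputable def UU1 (n : ℤ) (f : ℝ → ℝ) (a b t : ℝ) : ℝ :=
  cG n * (gPhi' n t * FF n f a t + gPsi' n t * HHg n f b t)
noncomputable def UU2 (n : ℤ) (f : ℝ → ℝ) (a b t : ℝ) : ℝ :=
  ((n:ℝ)^2 - 2*(1/Real.cosh t)^2) * UU n f a b t + f t

lemma hasDerivAt_FF (n : ℤ) {f : ℝ → ℝ} (hf : Continuous f) (a t : ℝ) :
    HasDerivAt (FF n f a) (gPsi n t * f t) t := by
  have hc : Continuous fun s => gPsi n s * f s := (continuous_gPsi n).mul hf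
  exact (intervalIntegral.integral_hasStrictDerivAt_right (hc.intervalIntegrable a t)
    (hc.stronglyMeasurableAtFilter _ _) hc.continuousAt).hasDerivAt

lemma hasDerivAt_HHg (n : ℤ) {f : ℝ → ℝ} (hf : Continuous f) (b t : ℝ) :
    HasDerivAt (HHg n f b) (-(gPhi n t * f t)) t := by
  have hc : Continuous fun s => gPhi n s * f s := (continuous_gPhi n).mul hf
  exact (intervalIntegral.integral_hasStrictDerivAt_left (hc.intervalIntegrable t b)
    (hc.stronglyMeasurableAtFilter _ _) hc.continuousAt).hasDerivAt

lemma hasDerivAt_UU (n : ℤ) {f : ℝ → ℝ} (hf : Continuous f) (a b t : ℝ) :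
    HasDerivAt (UU n f a b) (UU1 n f a b t) t := by
  have := (((hasDerivAt_gPhi n t).mul (hasDerivAt_FF n hf a t)).add
    ((hasDerivAt_gPsi n t).mul (hasDerivAt_HHg n hf b t))).const_mul (cG n)
  refine this.congr_deriv ?_
  unfold UU1; ring

lemma hasDerivAt_UU1 (n : ℤ) (hn : 2 ≤ n) {f : ℝ → ℝ} (hf : Continuous f) (a b t : ℝ) :
    HasDerivAt (UU1 n f a b) (UU2 n f a b t) t := by
  have hn2 : (2:ℝ) ≤ (n:ℝ) := by exact_mod_cast hn
  have hD : 2*(n:ℝ)*(1-(n:ℝ)^2) ≠ 0 := by nlinarith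
  have key : cG n * (gPhi' n t * gPsi n t - gPsi' n t * gPhi n t) = 1 := by
    rw [wronskian_gPhi_gPsi]; unfold cG; field_simp
    exact div_self (by nlinarith)
  have := (((hasDerivAt_gPhi' n t).mul (hasDerivAt_FF n hf a t)).add
    ((hasDerivAt_gPsi' n t).mul (hasDerivAt_HHg n hf b t))).const_mul (cG n)
  refine this.congr_deriv ?_
  have hcc : (1/Real.cosh t)^2 = 1/Real.cosh t^2 := by rw [div_pow, one_pow]
  unfold UU2 UU
  rw [hcc]
  linear_combination (f t) * key

lemma continuous_UU (n : ℤ) {f : ℝ → ℝ} (hf : Continuous f) (a b : ℝ) :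
    Continuous (UU n f a b) :=
  (Differentiable.continuous fun t => (hasDerivAt_UU n hf a b t).differentiableAt)

lemma contDiff_UU (n : ℤ) (hn : 2 ≤ n) {f : ℝ → ℝ} (hf : Continuous f) (a b : ℝ) :
    ContDiff ℝ 2 (UU n f a b) := by
  rw [show (2 : WithTop ℕ∞) = 1 + 1 by norm_num, contDiff_succ_iff_deriv]
  refine ⟨fun t => (hasDerivAt_UU n hf a b t).differentiableAt, by simp, ?_⟩
  have dU : deriv (UU n f a b) = UU1 n f a b :=
    funext fun x => (hasDerivAt_UU n hf a b x).deriv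
  rw [dU, contDiff_one_iff_deriv]
  refine ⟨fun t => (hasDerivAt_UU1 n hn hf a b t).differentiableAt, ?_⟩
  have dU1 : deriv (UU1 n f a b) = UU2 n f a b :=
    funext fun x => (hasDerivAt_UU1 n hn hf a b x).deriv
  rw [dU1]
  unfold UU2
  have h2 : Continuous fun t : ℝ => (n:ℝ)^2 - 2*(1/Real.cosh t)^2 :=
    continuous_const.sub (continuous_const.mul (((continuous_const.div Real.continuous_cosh
      fun x => (Real.cosh_pos x).ne')).pow 2))
  exact (h2.mul (continuous_UU n hf a b)).add hf

/-- For any continuous compactly supported `f`, the function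
`u(t) = ∫ G_n(t,s) f(s) ds` is `C²`, bounded, and solves
`u'' + 2 sech²(t) u − n² u = f`. -/
theorem greenGn_solves (n : ℤ) (hn : 2 ≤ n) (f : ℝ → ℝ)
    (hf : Continuous f) (hsupp : HasCompactSupport f) :
    ContDiff ℝ 2 (fun t => ∫ s, greenGn n t s * f s) ∧
    (∃ M : ℝ, ∀ t : ℝ, |∫ s, greenGn n t s * f s| ≤ M) ∧
    ∀ t : ℝ,
      deriv (deriv (fun t' => ∫ s, greenGn n t' s * f s)) t
        + 2 * (1 / Real.cosh t) ^ 2 * (∫ s, greenGn n t s * f s)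
        - (n : ℝ) ^ 2 * (∫ s, greenGn n t s * f s) = f t := by
  have hint : ∀ t, Integrable (fun s => greenGn n t s * f s) := fun t =>
    ((continuous_greenGn_snd n t).mul hf).integrable_of_hasCompactSupport hsupp.mul_left
  obtain ⟨R, hR⟩ := hsupp.isCompact.isBounded.subset_closedBall 0
  set a : ℝ := -R - 1 with ha
  set b : ℝ := R + 1 with hb
  have hfz : ∀ s : ℝ, s ∉ Icc (-R) R → f s = 0 := by
    intro s hs
    apply image_eq_zero_of_notMem_tsupport
    intro hmem
    exact hs (by simpa [Real.closedBall_eq_Icc, zero_sub, zero_add] using hR hmem)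
  have hIic : ∀ t, ∫ s in Iic t, gPsi n s * f s = FF n f a t := by
    intro t
    have hnotmem : ∀ x : ℝ, x ≤ a → gPsi n x * f x = 0 := by
      intro x hxa
      rw [ha] at hxa
      rw [hfz x (by simp only [mem_Icc, not_and_or, not_le]; left; linarith), mul_zero]
    rcases le_or_gt a t with hat | hat
    · rw [FF, intervalIntegral.integral_of_le hat]
      apply setIntegral_eq_of_subset_of_forall_diff_eq_zero measurableSet_Iic
      · exact fun x hx => hx.2
      · intro x hx
        refine hnotmem x ?_
        by_contra hxa
        exact hx.2 ⟨not_le.mp hxa, hx.1⟩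
    · have hz1 : ∀ x ∈ Ioc t a, gPsi n x * f x = 0 := fun x hx => hnotmem x hx.2
      have hz2 : ∀ x ∈ Iic t, gPsi n x * f x = 0 := fun x hx =>
        hnotmem x (le_of_lt (lt_of_le_of_lt hx hat))
      rw [FF, intervalIntegral.integral_symm, intervalIntegral.integral_of_le hat.le,
        setIntegral_eq_zero_of_forall_eq_zero hz1,
        setIntegral_eq_zero_of_forall_eq_zero hz2, neg_zero]
  have hIoi : ∀ t, ∫ s in Ioi t, gPhi n s * f s = HHg n f b t := by
    intro t
    have hnotmem : ∀ x : ℝ, b ≤ x → gPhi n x * f x = 0 := by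
      intro x hxb
      rw [hb] at hxb
      rw [hfz x (by simp only [mem_Icc, not_and_or, not_le]; right; linarith), mul_zero]
    rcases le_or_gt t b with htb | htb
    · rw [HHg, intervalIntegral.integral_of_le htb]
      apply setIntegral_eq_of_subset_of_forall_diff_eq_zero measurableSet_Ioi
      · exact fun x hx => hx.1
      · intro x hx
        refine hnotmem x ?_
        by_contra hxb
        exact hx.2 ⟨hx.1, le_of_not_ge hxb⟩
    · have hz1 : ∀ x ∈ Ioc b t, gPhi n x * f x = 0 := fun x hx => hnotmem x hx.1.le
      have hz2 : ∀ x ∈ Ioi t, gPhi n x * f x = 0 := fun x hx =>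
        hnotmem x (le_of_lt (lt_trans htb hx))
      rw [HHg, intervalIntegral.integral_symm, intervalIntegral.integral_of_le htb.le,
        setIntegral_eq_zero_of_forall_eq_zero hz1,
        setIntegral_eq_zero_of_forall_eq_zero hz2, neg_zero]
  have rep : ∀ t, (∫ s, greenGn n t s * f s) = UU n f a b t := by
    intro t
    rw [← intervalIntegral.integral_Iic_add_Ioi ((hint t).integrableOn) ((hint t).integrableOn)]
    have e1 : ∫ s in Iic t, greenGn n t s * f s
        = (cG n * gPhi n t) * ∫ s in Iic t, gPsi n s * f s := by
      rw [← integral_const_mul]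
      apply setIntegral_congr_fun measurableSet_Iic
      intro s hs
      show greenGn n t s * f s = cG n * gPhi n t * (gPsi n s * f s)
      rw [greenGn_left n hs]
      ring
    have e2 : ∫ s in Ioi t, greenGn n t s * f s
        = (cG n * gPsi n t) * ∫ s in Ioi t, gPhi n s * f s := by
      rw [← integral_const_mul]
      apply setIntegral_congr_fun measurableSet_Ioi
      intro s hs
      show greenGn n t s * f s = cG n * gPsi n t * (gPhi n s * f s)
      rw [greenGn_right n (le_of_lt hs)]
      ring
    rw [e1, e2, hIic t, hIoi t]
    unfold UU; ring
  have hrepfun : (fun t => ∫ s, greenGn n t s * f s) = UU n f a b := funext rep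
  refine ⟨?_, ?_, ?_⟩
  · rw [hrepfun]; exact contDiff_UU n hn hf a b
  · refine ⟨|cG n| * ((n:ℝ)+1)^2 * ∫ s, |f s|, fun t => ?_⟩
    have hfi : Integrable f := hf.integrable_of_hasCompactSupport hsupp
    calc |∫ s, greenGn n t s * f s| ≤ ∫ s, |greenGn n t s * f s| := by
          simpa only [Real.norm_eq_abs] using
            norm_integral_le_integral_norm (fun s => greenGn n t s * f s)
      _ ≤ ∫ s, |cG n| * ((n:ℝ)+1)^2 * |f s| := by
          apply integral_mono (hint t).abs (hfi.abs.const_mul _)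
          intro s
          simp only [abs_mul]
          exact mul_le_mul_of_nonneg_right (abs_greenGn_le n hn t s) (abs_nonneg _)
      _ = |cG n| * ((n:ℝ)+1)^2 * ∫ s, |f s| := integral_const_mul _ _
  · intro t
    rw [hrepfun, rep t]
    have dU : deriv (UU n f a b) = UU1 n f a b :=
      funext fun x => (hasDerivAt_UU n hf a b x).deriv
    rw [dU, (hasDerivAt_UU1 n hn hf a b t).deriv]
    unfold UU2; ring
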